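/- Let κ, ρ > 1 be real numbers with κ + 1 > 2ρ. Then for every c > 0 there exists a₀ ∈ [0, ∞) such that for all real x > y > 0: x^{2ρ−1} − y^{2ρ−1} ≤ c·(x^κ − y^κ) + a₀·(x − y). -/

import Mathlib

/-- Key divided-difference estimate z_{2ρ−1} ≤ c z_κ + a₀ for the Ait-Sahalia model
in the standard regime κ + 1 > 2ρ. -/
theorem stmt_7 (κ ρ : ℝ) (hκ : 1 < κ) (hρ : 1 < ρ) (hreg : κ + 1 > 2 * ρ) :
    ∀ c : ℝ, 0 < c → ∃ a₀ : ℝ, 0 ≤ a₀ ∧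
      ∀ x y : ℝ, 0 < y → y < x →
        x ^ (2 * ρ - 1) - y ^ (2 * ρ - 1) ≤ c * (x ^ κ - y ^ κ) + a₀ * (x - y) := by
  intro c hc
  have hα : (0:ℝ) < 2 * ρ - 2 := by linarith
  have hd : (0:ℝ) < (κ - 1) - (2 * ρ - 2) := by linarith
  set d : ℝ := (κ - 1) - (2 * ρ - 2) with hd_def
  set r : ℝ := (2 * ρ - 1) / (c * κ) with hr_def
  have hκ0 : (0:ℝ) < κ := by linarith
  have hr0 : 0 ≤ r := div_nonneg (by linarith) (by positivity)
  set M : ℝ := max 1 (r ^ (1/d)) with hM_def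
  have hM1 : (1:ℝ) ≤ M := le_max_left _ _
  have hM0 : (0:ℝ) < M := lt_of_lt_of_le one_pos hM1
  set a₀ : ℝ := (2*ρ-1) * M ^ (2*ρ-2) with ha_def
  have ha0 : 0 ≤ a₀ := by
    have := Real.rpow_nonneg hM0.le (2*ρ-2)
    rw [ha_def]
    nlinarith
  refine ⟨a₀, ha0, ?_⟩
  have key : ∀ v : ℝ, 0 < v → (2*ρ-1) * v ^ (2*ρ-2) ≤ c * κ * v ^ (κ-1) + a₀ := by
    intro v hv
    rcases le_or_gt v M with h | h
    · have h0 : v ^ (2*ρ-2) ≤ M ^ (2*ρ-2) := Real.rpow_le_rpow hv.le h hα.le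
      have h1 : (2*ρ-1) * v ^ (2*ρ-2) ≤ a₀ := by
        rw [ha_def]; exact mul_le_mul_of_nonneg_left h0 (by linarith)
      have h2 : 0 ≤ c * κ * v ^ (κ-1) := by positivity
      linarith
    · have hvM : M ≤ v := h.le
      have hMd : r ≤ M ^ d := by
        calc r = (r ^ (1/d)) ^ d := by
              rw [one_div, Real.rpow_inv_rpow hr0 (ne_of_gt hd)]
          _ ≤ M ^ d := Real.rpow_le_rpow (Real.rpow_nonneg hr0 _) (le_max_right _ _) hd.le
      have hvd : M ^ d ≤ v ^ d := Real.rpow_le_rpow hM0.le hvM hd.le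
      have h2 : 2*ρ-1 ≤ c * κ * v ^ d := by
        have h3 := hMd.trans hvd
        rw [hr_def, div_le_iff₀ (by positivity)] at h3
        linarith
      have h4 : (2*ρ-1) * v ^ (2*ρ-2) ≤ c * κ * v ^ d * v ^ (2*ρ-2) :=
        mul_le_mul_of_nonneg_right h2 (Real.rpow_nonneg hv.le _)
      have hde : d + (2*ρ-2) = κ - 1 := by rw [hd_def]; ring
      have heq : c * κ * v ^ d * v ^ (2*ρ-2) = c * κ * v ^ (κ-1) := by
        rw [mul_assoc, ← Real.rpow_add hv, hde]
      have h5 : 0 ≤ a₀ := ha0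
      rw [heq] at h4
      linarith
  intro x y hy hyx
  set g : ℝ → ℝ := fun t => c * t ^ κ + a₀ * t - t ^ (2*ρ-1) with hg_def
  have hg : ∀ t ∈ Set.Ioi (0:ℝ), HasDerivAt g (c*κ*t^(κ-1) + a₀ - (2*ρ-1)*t^(2*ρ-2)) t := by
    intro t ht
    have ht0 : t ≠ 0 := ne_of_gt ht
    have h1 := Real.hasDerivAt_rpow_const (x := t) (p := κ) (Or.inl ht0)
    have h2 := Real.hasDerivAt_rpow_const (x := t) (p := 2*ρ-1) (Or.inl ht0)
    have h3 := ((h1.const_mul c).add ((hasDerivAt_id t).const_mul a₀)).sub h2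
    have he : (2*ρ-1) - 1 = 2*ρ-2 := by ring
    rw [he] at h3
    convert h3 using 1
    · rfl
    · rfl
    · rfl
    · ring
  have mono : MonotoneOn g (Set.Ioi (0:ℝ)) := by
    apply monotoneOn_of_deriv_nonneg (convex_Ioi 0)
    · exact fun t ht => (hg t ht).continuousAt.continuousWithinAt
    · rw [interior_Ioi]
      exact fun t ht => (hg t ht).differentiableAt.differentiableWithinAt
    · rw [interior_Ioi]
      intro t ht
      rw [(hg t ht).deriv]
      have := key t ht
      linarith
  have hgle : g y ≤ g x := mono hy (hy.trans hyx) hyx.le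
  rw [hg_def] at hgle
  simp only at hgle
  linarith
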